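/- Let U = {1, …, u} be a universe, 𝒮 a family of nonempty subsets of U, and κ ∈ ℕ. Construct the training data set over features d_1, …, d_u: for each i ∈ U, one blue universe example with value −1 in d_i and value 1 in all other features; for each S ∈ 𝒮, κ + 1 copies of a red example with value 0 in d_i for i ∈ S and value 1 in d_i for i ∉ S; and κ + 1 copies of a blue example with value 1 in every feature. Let T be the decision tree whose cuts c_1, …, c_u form a path, where c_i has feature d_i and threshold −1/2, the left child of every c_i is a leaf labeled red, the right child of c_i is c_{i+1} for i < u, and the right child of c_u is a leaf labeled blue. Then there exists H ⊆ U with |H| ≤ κ such that H ∩ S ≠ ∅ for every S ∈ 𝒮 if and only if the Threshold Adjustment instance ((E, λ), T, u, κ) is a yes-instance. -/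

import Mathlib

/-- The two class labels. -/
def blue : Bool := true

def red : Bool := false

/-- Decision trees with features of type `α`: each leaf carries a class label,
each internal node (a *cut*) carries a feature and a real threshold. -/
inductive DTree (α : Type) : Type
  | leaf (label : Bool) : DTree α
  | node (feat : α) (thr : ℝ) (left right : DTree α) : DTree α

namespace DTree

/-- The class that the tree assigns to the example `e`. -/
noncomputable def classify {α : Type} : DTree α → (α → ℝ) → Bool
  | leaf c, _ => c
  | node f x l r, e => if e f ≤ x then l.classify e else r.classify e

end DTree

/-- The number of errors of `T` on the training data set `(E, lab)`. -/
noncomputable def errorCount {α ι : Type} [Fintype ι] (E : ι → α → ℝ)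
    (lab : ι → Bool) (T : DTree α) : ℕ :=
  (Finset.univ.filter (fun i => T.classify (E i) ≠ lab i)).card

/-- `T'` has the same shape as `T` and the same feature at every cut; thresholds and
leaf labels may differ. -/
def SameShapeFeat {α : Type} : DTree α → DTree α → Prop
  | DTree.leaf _, DTree.leaf _ => True
  | DTree.node f _ l r, DTree.node f' _ l' r' =>
      f = f' ∧ SameShapeFeat l l' ∧ SameShapeFeat r r'
  | _, _ => False

/-- The number of cuts at which the thresholds of the two (same-shaped) trees
differ. -/
noncomputable def adjCost {α : Type} : DTree α → DTree α → ℕ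
  | DTree.node _ x l r, DTree.node _ x' l' r' =>
      (if x = x' then 0 else 1) + adjCost l l' + adjCost r r'
  | _, _ => 0

/-- The Threshold Adjustment instance `((E, lab), T, k, t)` is a yes-instance. -/
def TAYes {α ι : Type} [Fintype ι] (E : ι → α → ℝ) (lab : ι → Bool)
    (T : DTree α) (k t : ℕ) : Prop :=
  ∃ T' : DTree α, SameShapeFeat T T' ∧ adjCost T T' ≤ k ∧ errorCount E lab T' ≤ t

/-- The path-shaped decision tree whose cuts use the listed features (in order), all
with threshold `thr`; the left child of every cut is a red leaf, the right child of
the last cut is a blue leaf. -/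
def chainTree {α : Type} (thr : ℝ) : List α → DTree α
  | [] => DTree.leaf blue
  | f :: fs => DTree.node f thr (DTree.leaf red) (chainTree thr fs)

/-! ### Auxiliary machinery -/

/-- A chain tree with per-cut data: feature, threshold, left-leaf label. -/
def gchain {α : Type} : List (α × ℝ × Bool) → Bool → DTree α
  | [], b => DTree.leaf b
  | p :: rest, b => DTree.node p.1 p.2.1 (DTree.leaf p.2.2) (gchain rest b)

lemma classify_gchain_nil {α : Type} (b : Bool) (e : α → ℝ) :
    (gchain ([] : List (α × ℝ × Bool)) b).classify e = b := rfl

lemma classify_gchain_cons {α : Type} (p : α × ℝ × Bool) (d : List (α × ℝ × Bool))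
    (b : Bool) (e : α → ℝ) :
    (gchain (p :: d) b).classify e =
      if e p.1 ≤ p.2.1 then p.2.2 else (gchain d b).classify e := rfl

lemma sameShapeFeat_gchain {α : Type} (thr : ℝ) :
    ∀ (d : List (α × ℝ × Bool)) (l : List α) (b : Bool), d.map Prod.fst = l →
    SameShapeFeat (chainTree thr l) (gchain d b) := by
  intro d
  induction d with
  | nil =>
    intro l b h
    simp at h; subst h
    simp [chainTree, gchain, SameShapeFeat]
  | cons p rest ih =>
    intro l b h
    cases l with
    | nil => simp at h
    | cons f fs =>
      simp at h
      obtain ⟨h1, h2⟩ := h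
      exact ⟨h1.symm, trivial, ih fs b h2⟩

lemma sameShapeFeat_chain_inv {α : Type} (thr : ℝ) :
    ∀ (l : List α) (T' : DTree α), SameShapeFeat (chainTree thr l) T' →
    ∃ d b, T' = gchain d b ∧ d.map Prod.fst = l := by
  intro l
  induction l with
  | nil =>
    intro T' h
    cases T' with
    | leaf b => exact ⟨[], b, rfl, rfl⟩
    | node f x l' r' => exact absurd h (by simp [chainTree, SameShapeFeat])
  | cons f fs ih =>
    intro T' h
    cases T' with
    | leaf b => exact absurd h (by simp [chainTree, SameShapeFeat])
    | node f' x l' r' =>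
      obtain ⟨hf, hl, hr⟩ := h
      cases l' with
      | leaf c =>
        obtain ⟨d, b, hT, hmap⟩ := ih r' hr
        exact ⟨(f', x, c) :: d, b, by simp [gchain, hT], by simp [hmap, hf]⟩
      | node _ _ _ _ => exact absurd hl (by simp [SameShapeFeat])

lemma adjCost_chain_le {α : Type} (thr : ℝ) :
    ∀ (l : List α) (T' : DTree α), adjCost (chainTree thr l) T' ≤ l.length := by
  intro l
  induction l with
  | nil =>
    intro T'
    cases T' <;> simp [chainTree, adjCost]
  | cons f fs ih =>
    intro T'
    cases T' with
    | leaf b => simp [chainTree, adjCost]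
    | node f' x l' r' =>
      have h0 : adjCost (DTree.leaf red) l' = 0 := by cases l' <;> simp [adjCost]
      have : adjCost (chainTree thr (f :: fs)) (DTree.node f' x l' r') =
          (if thr = x then 0 else 1) + adjCost (DTree.leaf red) l' +
            adjCost (chainTree thr fs) r' := rfl
      rw [this, h0]
      have := ih r'
      simp only [List.length_cons]
      split <;> omega

lemma classify_gchain_congr {α : Type} :
    ∀ (d : List (α × ℝ × Bool)) (b : Bool) (e e' : α → ℝ),
    (∀ f ∈ d.map Prod.fst, e f = e' f) →
    (gchain d b).classify e = (gchain d b).classify e' := by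
  intro d
  induction d with
  | nil => intro b e e' _; rfl
  | cons p rest ih =>
    intro b e e' h
    rw [classify_gchain_cons, classify_gchain_cons]
    have h1 : e p.1 = e' p.1 := h p.1 (by simp)
    rw [h1, ih b e e' (fun f hf => h f (by simp [hf]))]

lemma classify_redchain_blue_iff {α : Type} (t : α → ℝ) :
    ∀ (l : List α) (e : α → ℝ),
    ((gchain (l.map fun f => (f, t f, red)) blue).classify e = blue ↔
      ∀ f ∈ l, ¬ e f ≤ t f) := by
  intro l
  induction l with
  | nil => intro e; simp [classify_gchain_nil]
  | cons f fs ih =>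
    intro e
    simp only [List.map_cons, classify_gchain_cons]
    split
    · next hle => simp [red, blue, hle]
    · next hle =>
        rw [ih e]
        constructor
        · intro hall g hg
          rcases List.mem_cons.mp hg with rfl | hg'
          · exact hle
          · exact hall g hg'
        · intro hall g hg
          exact hall g (List.mem_cons_of_mem _ hg)

lemma bool_ne_blue {b : Bool} : b ≠ blue ↔ b = red := by
  cases b <;> simp [blue, red]

/-- The core combinatorial lemma: if the tree classifies the all-ones example blue
and the `S`-example red, then it classifies some universe example `i ∈ S` red. -/
lemma core_lemma {u : ℕ} (S : Finset (Fin u)) (b : Bool) :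
    ∀ d : List (Fin u × ℝ × Bool), (d.map Prod.fst).Nodup →
    (gchain d b).classify (fun _ => (1 : ℝ)) = blue →
    (gchain d b).classify (fun j => if j ∈ S then (0 : ℝ) else 1) = red →
    ∃ i ∈ S, (gchain d b).classify (fun j => if j = i then (-1 : ℝ) else 1) = red := by
  intro d
  induction d with
  | nil =>
    intro _ hone hS
    rw [classify_gchain_nil] at hone hS
    exact absurd (hone ▸ hS) (by simp [blue, red])
  | cons p rest ih =>
    intro hnd hone hS
    obtain ⟨f, x, c⟩ := p
    simp only [List.map_cons, List.nodup_cons] at hnd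
    obtain ⟨hfnotin, hnd'⟩ := hnd
    rw [classify_gchain_cons] at hone hS
    simp only at hone hS
    by_cases hcase : (if f ∈ S then (0 : ℝ) else 1) ≤ x
    · -- S-example exits at this cut, with leaf label `c = red`
      rw [if_pos hcase] at hS
      by_cases hfS : f ∈ S
      · -- `x ≥ 0`, so universe example `f` also exits here
        rw [if_pos hfS] at hcase
        refine ⟨f, hfS, ?_⟩
        show (if (if f = f then (-1 : ℝ) else 1) ≤ x then c
            else (gchain rest b).classify fun j => if j = f then (-1 : ℝ) else 1) = red
        rw [if_pos rfl, if_pos (by linarith : (-1 : ℝ) ≤ x)]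
        exact hS
      · -- then the all-ones example also exits here, contradiction
        rw [if_neg hfS] at hcase
        rw [if_pos hcase] at hone
        rw [hone] at hS
        exact absurd hS (by simp [blue, red])
    · -- S-example continues right
      rw [if_neg hcase] at hS
      have hx1 : ¬ (1 : ℝ) ≤ x := by
        by_cases hfS : f ∈ S
        · rw [if_pos hfS] at hcase; intro h; exact hcase (by linarith)
        · rwa [if_neg hfS] at hcase
      rw [if_neg hx1] at hone
      obtain ⟨i, hiS, hired⟩ := ih hnd' hone hS
      refine ⟨i, hiS, ?_⟩
      have hfi : f ≠ i := by
        rintro rfl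
        have : (gchain rest b).classify (fun j => if j = f then (-1 : ℝ) else 1) =
            (gchain rest b).classify (fun _ => (1 : ℝ)) := by
          apply classify_gchain_congr
          intro g hg
          have : g ≠ f := fun h => hfnotin (h ▸ hg)
          simp [this]
        rw [this, hone] at hired
        exact absurd hired (by simp [blue, red])
      show (if (if f = i then (-1 : ℝ) else 1) ≤ x then c
          else (gchain rest b).classify fun j => if j = i then (-1 : ℝ) else 1) = red
      rw [if_neg hfi, if_neg hx1]
      exact hired

/-- Hitting-set reduction with parameter `t`. Examples: for each
`i ∈ U` one blue universe example (value `−1` in `d_i`, `1` elsewhere); for each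
`S ∈ 𝒮`, `κ + 1` copies of a red example (value `0` on `S`, `1` elsewhere); and
`κ + 1` copies of a blue example with all values `1`. The tree is the path of cuts
`c_1, …, c_u`, where `c_i` has feature `d_i` and threshold `−1/2`. Then a hitting set
of size at most `κ` exists if and only if `((E, λ), T, u, κ)` is a yes-instance of
Threshold Adjustment. -/
theorem stmt13 (u : ℕ) (𝒮 : Finset (Finset (Fin u))) (h𝒮 : ∀ S ∈ 𝒮, S.Nonempty)
    (κ : ℕ) :
    (∃ H : Finset (Fin u), H.card ≤ κ ∧ ∀ S ∈ 𝒮, (H ∩ S).Nonempty) ↔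
    TAYes (ι := Fin u ⊕ ({S : Finset (Fin u) // S ∈ 𝒮} × Fin (κ + 1)) ⊕ Fin (κ + 1))
      (Sum.elim (fun i' (j : Fin u) => if j = i' then (-1 : ℝ) else 1)
        (Sum.elim (fun Sc (j : Fin u) => if j ∈ Sc.1.1 then (0 : ℝ) else 1)
          (fun _ (_ : Fin u) => 1)))
      (Sum.elim (fun _ => blue) (Sum.elim (fun _ => red) (fun _ => blue)))
      (chainTree (-1/2) (List.finRange u)) u κ := by
  set E : (Fin u ⊕ ({S : Finset (Fin u) // S ∈ 𝒮} × Fin (κ + 1)) ⊕ Fin (κ + 1)) → Fin u → ℝ :=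
    (Sum.elim (fun i' (j : Fin u) => if j = i' then (-1 : ℝ) else 1)
      (Sum.elim (fun Sc (j : Fin u) => if j ∈ Sc.1.1 then (0 : ℝ) else 1)
        (fun _ (_ : Fin u) => 1))) with hE
  set lab : (Fin u ⊕ ({S : Finset (Fin u) // S ∈ 𝒮} × Fin (κ + 1)) ⊕ Fin (κ + 1)) → Bool :=
    (Sum.elim (fun _ => blue) (Sum.elim (fun _ => red) (fun _ => blue))) with hlab
  constructor
  · rintro ⟨H, hHcard, hHhit⟩
    set t : Fin u → ℝ := fun i => if i ∈ H then 0 else -2 with ht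
    set d := (List.finRange u).map (fun i => (i, t i, red)) with hd
    refine ⟨gchain d blue, ?_, ?_, ?_⟩
    · exact sameShapeFeat_gchain _ d (List.finRange u) blue (by simp [hd, Function.comp_def])
    · calc adjCost (chainTree (-1/2) (List.finRange u)) (gchain d blue)
          ≤ (List.finRange u).length := adjCost_chain_le _ _ _
        _ = u := by simp
    · unfold errorCount
      have hsub : Finset.univ.filter
          (fun i => (gchain d blue).classify (E i) ≠ lab i) ⊆
          H.map ⟨Sum.inl, Sum.inl_injective⟩ := by
        intro x hx
        rw [Finset.mem_filter] at hx
        obtain ⟨-, hx⟩ := hx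
        rcases x with i | ⟨Sc, cpy⟩ | cpy
        · -- universe example: error implies `i ∈ H`
          simp only [Finset.mem_map, Function.Embedding.coeFn_mk]
          refine ⟨i, ?_, rfl⟩
          by_contra hiH
          apply hx
          simp only [hE, hlab, Sum.elim_inl]
          rw [hd, classify_redchain_blue_iff]
          intro f _
          by_cases hfi : f = i
          · subst hfi; simp [ht, hiH]
          · simp only [if_neg hfi, ht]
            split <;> norm_num
        · -- set example: classified red, no error
          exfalso
          apply hx
          simp only [hE, hlab, Sum.elim_inr, Sum.elim_inl]
          rw [← bool_ne_blue]
          intro hblue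
          rw [hd, classify_redchain_blue_iff] at hblue
          obtain ⟨j, hjmem⟩ := hHhit Sc.1 Sc.2
          rw [Finset.mem_inter] at hjmem
          exact hblue j (List.mem_finRange j)
            (by simp [ht, hjmem.1, hjmem.2, Finset.mem_val])
        · -- all-ones example: classified blue, no error
          exfalso
          apply hx
          simp only [hE, hlab, Sum.elim_inr]
          rw [hd, classify_redchain_blue_iff]
          intro f _
          simp only [ht]
          split <;> norm_num
      calc (Finset.univ.filter _).card ≤ (H.map ⟨Sum.inl, Sum.inl_injective⟩).card :=
            Finset.card_le_card hsub
        _ = H.card := Finset.card_map _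
        _ ≤ κ := hHcard
  · rintro ⟨T', hshape, -, herr⟩
    obtain ⟨d, b, rfl, hmap⟩ := sameShapeFeat_chain_inv _ _ _ hshape
    set H : Finset (Fin u) :=
      Finset.univ.filter (fun i => (gchain d b).classify (E (Sum.inl i)) = red) with hH
    have hHsub : H.map ⟨Sum.inl, Sum.inl_injective⟩ ⊆
        Finset.univ.filter (fun i => (gchain d b).classify (E i) ≠ lab i) := by
      intro x hx
      simp only [Finset.mem_map, Function.Embedding.coeFn_mk] at hx
      obtain ⟨i, hiH, rfl⟩ := hx
      rw [hH, Finset.mem_filter] at hiH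
      rw [Finset.mem_filter]
      refine ⟨Finset.mem_univ _, ?_⟩
      rw [hiH.2, hlab]
      simp [blue, red]
    refine ⟨H, ?_, ?_⟩
    · calc H.card = (H.map ⟨Sum.inl, Sum.inl_injective⟩).card := (Finset.card_map _).symm
        _ ≤ _ := Finset.card_le_card hHsub
        _ ≤ κ := herr
    · intro S hS
      -- the all-ones example must be classified blue
      have hone : (gchain d b).classify (fun _ => (1 : ℝ)) = blue := by
        by_contra hone
        have : (Finset.univ : Finset (Fin (κ + 1))).map
            ⟨fun c => Sum.inr (Sum.inr c), fun a b h => by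
              simpa using h⟩ ⊆
            Finset.univ.filter (fun i => (gchain d b).classify (E i) ≠ lab i) := by
          intro x hx
          simp only [Finset.mem_map, Function.Embedding.coeFn_mk] at hx
          obtain ⟨c, -, rfl⟩ := hx
          change (Sum.inr (Sum.inr c) : Fin u ⊕ ({S : Finset (Fin u) // S ∈ 𝒮} × Fin (κ + 1)) ⊕ Fin (κ + 1)) ∈ _
          rw [Finset.mem_filter]
          exact ⟨Finset.mem_univ _, by simpa [hE, hlab] using hone⟩
        have hcard := Finset.card_le_card this
        rw [Finset.card_map] at hcard
        simp only [Finset.card_univ, Fintype.card_fin] at hcard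
        have := le_trans hcard herr
        omega
      -- the S-example must be classified red
      have hSred : (gchain d b).classify (fun j => if j ∈ S then (0 : ℝ) else 1) = red := by
        have hfun : (E (Sum.inr (Sum.inl (⟨S, hS⟩, ⟨0, Nat.succ_pos κ⟩)))) =
            (fun j => if j ∈ S then (0 : ℝ) else 1) := by
          funext j
          simp [hE, Finset.mem_val]
        by_contra hSred
        rw [← hfun, ← bool_ne_blue] at hSred
        push_neg at hSred
        have : (Finset.univ : Finset (Fin (κ + 1))).map
            ⟨fun c => Sum.inr (Sum.inl (⟨S, hS⟩, c)), fun a b h => by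
              simpa using h⟩ ⊆
            Finset.univ.filter (fun i => (gchain d b).classify (E i) ≠ lab i) := by
          intro x hx
          simp only [Finset.mem_map, Function.Embedding.coeFn_mk] at hx
          obtain ⟨c, -, rfl⟩ := hx
          change (Sum.inr (Sum.inl (⟨S, hS⟩, c)) : Fin u ⊕ ({S : Finset (Fin u) // S ∈ 𝒮} × Fin (κ + 1)) ⊕ Fin (κ + 1)) ∈ _
          rw [Finset.mem_filter]
          refine ⟨Finset.mem_univ _, ?_⟩
          have hEc : E (Sum.inr (Sum.inl (⟨S, hS⟩, c))) =
              E (Sum.inr (Sum.inl (⟨S, hS⟩, ⟨0, Nat.succ_pos κ⟩))) := by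
            simp [hE]
          rw [hEc, hSred, hlab]
          simp [blue, red]
        have hcard := Finset.card_le_card this
        rw [Finset.card_map] at hcard
        simp only [Finset.card_univ, Fintype.card_fin] at hcard
        have := le_trans hcard herr
        omega
      have hnd : (d.map Prod.fst).Nodup := by rw [hmap]; exact List.nodup_finRange u
      obtain ⟨i, hiS, hired⟩ := core_lemma S b d hnd hone hSred
      refine ⟨i, Finset.mem_inter.mpr ⟨?_, hiS⟩⟩
      rw [hH, Finset.mem_filter]
      refine ⟨Finset.mem_univ _, ?_⟩
      have : E (Sum.inl i) = (fun j => if j = i then (-1 : ℝ) else 1) := by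
        simp [hE]
      rw [this]
      exact hired
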